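/- Let X be a locally path connected and semilocally simply connected topological space. Then the following are equivalent: (1) X is Hausdorff; (2) Π₁(X) with the CO' topology is Hausdorff; (3) the path-homotopy relation ∼ is a closed subset of P(X) × P(X) (with the product of compact-open topologies). -/

import Mathlib

open unitInterval

noncomputable section

variable {X : Type*} [TopologicalSpace X]

/-- The path-homotopy (homotopy relative to `{0,1}`) relation on `C(I, X)`. -/
def pRel (f g : C(I, X)) : Prop := f.HomotopicRel g {0, 1}

/-- The path-homotopy setoid on `C(I, X)`. -/
def pSetoid (X : Type*) [TopologicalSpace X] : Setoid C(I, X) :=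
  ⟨pRel, ContinuousMap.HomotopicRel.equivalence⟩

/-- The fundamental groupoid `Π₁(X)` as the quotient of the path space `P(X) = C(I, X)`
(with the compact-open topology) by path homotopy; it carries the quotient (CO') topology. -/
abbrev Pi1 (X : Type*) [TopologicalSpace X] := Quotient (pSetoid X)

/-- The quotient map `q : P(X) → Π₁(X)`. -/
def pq : C(I, X) → Pi1 X := Quotient.mk (pSetoid X)

theorem pRel.endpts {f g : C(I, X)} (h : pRel f g) {t : I} (ht : t ∈ ({0, 1} : Set I)) :
    f t = g t := h.some.fst_eq_snd ht

/-- The source map `s : Π₁(X) → X`, `[γ] ↦ γ(0)`. -/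
def srcMap : Pi1 X → X :=
  Quotient.lift (fun f : C(I, X) => f 0) fun _ _ h =>
    pRel.endpts h (by simp)

/-- The range map `r : Π₁(X) → X`, `[γ] ↦ γ(1)`. -/
def rngMap : Pi1 X → X :=
  Quotient.lift (fun f : C(I, X) => f 1) fun _ _ h =>
    pRel.endpts h (by simp)

/-- A continuous map `I → X` regarded as a `Path` between its endpoints. -/
def toPath (f : C(I, X)) : Path (f 0) (f 1) := ⟨f, rfl, rfl⟩

/-- Concatenation `α ⧠ β` of paths: traverse `β` first and then `α`
(given `β 1 = α 0`). -/
def concat (α β : C(I, X)) (h : β 1 = α 0) : C(I, X) :=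
  ((toPath β).trans ((toPath α).cast h rfl)).toContinuousMap

@[simp] theorem concat_zero (α β : C(I, X)) (h : β 1 = α 0) : concat α β h 0 = β 0 :=
  ((toPath β).trans ((toPath α).cast h rfl)).source

@[simp] theorem concat_one (α β : C(I, X)) (h : β 1 = α 0) : concat α β h 1 = α 1 :=
  ((toPath β).trans ((toPath α).cast h rfl)).target

/-- The set `N([γ], U, V) = {[δ ⧠ γ ⧠ θ] : δ a path in U with δ 0 = γ 1,
θ a path in V with θ 1 = γ 0}` in `Π₁(X)`. -/
def Nhd (a : Pi1 X) (U V : Set X) : Set (Pi1 X) :=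
  { b | ∃ (γ δ θ : C(I, X)) (h₁ : θ 1 = γ 0) (h₂ : γ 1 = δ 0),
      pq γ = a ∧ Set.range δ ⊆ U ∧ Set.range θ ⊆ V ∧
      b = pq (concat δ (concat γ θ h₁) ((concat_one γ θ h₁).trans h₂)) }

/-- A subset `U ⊆ X` is relatively inessential in `X` if every loop in `U` is
null-homotopic (path-homotopic to a constant path) in `X`. -/
def RelInessential (X : Type*) [TopologicalSpace X] (U : Set X) : Prop :=
  ∀ γ : C(I, X), Set.range γ ⊆ U → γ 1 = γ 0 →
    pRel γ (ContinuousMap.const I (γ 0))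

/-- `X` is semilocally simply connected if every point has a relatively inessential
open neighbourhood. -/
def SemilocSimplyConnected (X : Type*) [TopologicalSpace X] : Prop :=
  ∀ x : X, ∃ U : Set X, IsOpen U ∧ x ∈ U ∧ RelInessential X U



section Aux
variable {X : Type*} [TopologicalSpace X]

namespace PAlg

lemma pRel_refl (f : C(I,X)) : pRel f f := ContinuousMap.HomotopicRel.refl f
lemma pRel_symm {f g : C(I,X)} (h : pRel f g) : pRel g f := ContinuousMap.HomotopicRel.symm h
lemma pRel_trans {f g k : C(I,X)} (h : pRel f g) (h' : pRel g k) : pRel f k :=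
  ContinuousMap.HomotopicRel.trans h h'
lemma e0 {f g : C(I,X)} (h : pRel f g) : f 0 = g 0 := h.some.fst_eq_snd (by simp)
lemma e1 {f g : C(I,X)} (h : pRel f g) : f 1 = g 1 := h.some.fst_eq_snd (by simp)
lemma pRel_of_eq {f g : C(I,X)} (h : f = g) : pRel f g := h ▸ pRel_refl f

instance : Trans (pRel (X:=X)) (pRel (X:=X)) (pRel (X:=X)) := ⟨pRel_trans⟩

scoped infixl:50 " ≈ₚ " => pRel

def rev (f : C(I,X)) : C(I,X) := (toPath f).symm.toContinuousMap
@[simp] lemma rev_zero (f : C(I,X)) : rev f 0 = f 1 := by simp [rev, toPath]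
@[simp] lemma rev_one (f : C(I,X)) : rev f 1 = f 0 := by simp [rev, toPath]
@[simp] lemma range_rev (f : C(I,X)) : Set.range (rev f) = Set.range f := by
  have : Set.range (rev f) = Set.range (toPath f).symm := rfl
  rw [this, Path.symm_range]; rfl

@[simp] lemma range_concat (α β : C(I,X)) (h : β 1 = α 0) :
    Set.range (concat α β h) = Set.range β ∪ Set.range α := by
  have : Set.range (concat α β h) = Set.range ((toPath β).trans ((toPath α).cast h rfl)) := rfl
  rw [this, Path.trans_range]; rfl

lemma concat_congr {α α' β β' : C(I,X)} (ha : pRel α α') (hb : pRel β β')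
    (h : β 1 = α 0) (h' : β' 1 = α' 0) : pRel (concat α β h) (concat α' β' h') := by
  have H : ((toPath β).trans ((toPath α).cast h rfl)).Homotopic
      (((toPath β').cast (e0 hb) (e1 hb)).trans
        ((((toPath α').cast (e0 ha) (e1 ha))).cast h rfl)) :=
    Path.Homotopic.hcomp hb ha
  exact H

lemma concat_assoc (α β γ : C(I,X)) (hβγ : γ 1 = β 0) (hαβ : β 1 = α 0)
    (h₁ : (concat β γ hβγ) 1 = α 0) (h₂ : γ 1 = (concat α β hαβ) 0) :
    pRel (concat α (concat β γ hβγ) h₁) (concat (concat α β hαβ) γ h₂) :=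
  ⟨Path.Homotopy.transAssoc (toPath γ) ((toPath β).cast hβγ rfl)
    (((toPath α).cast hαβ rfl).cast (by simp [hαβ]) rfl)⟩

lemma concat_const_left (α : C(I,X)) (x : X) (h : α 1 = (ContinuousMap.const I x) 0) :
    pRel (concat (ContinuousMap.const I x) α h) α := by
  have h' : α 1 = x := h
  subst h'
  exact ⟨Path.Homotopy.transRefl (toPath α)⟩

lemma concat_const_right (α : C(I,X)) (x : X) (h : (ContinuousMap.const I x) 1 = α 0) :
    pRel (concat α (ContinuousMap.const I x) h) α := by
  have h' : x = α 0 := h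
  subst h'
  exact ⟨Path.Homotopy.reflTrans (toPath α)⟩

lemma concat_rev_right (α : C(I,X)) (h : rev α 1 = α 0) :
    pRel (concat α (rev α) h) (ContinuousMap.const I (α 1)) :=
  ⟨(Path.Homotopy.reflSymmTrans (toPath α)).symm⟩

lemma concat_rev_left (α : C(I,X)) (h : α 1 = rev α 0) :
    pRel (concat (rev α) α h) (ContinuousMap.const I (α 0)) :=
  ⟨(Path.Homotopy.reflTransSymm (toPath α)).symm⟩

lemma rev_congr {f g : C(I,X)} (h : pRel f g) : pRel (rev f) (rev g) := by
  have H : Path.Homotopic (toPath f) ((toPath g).cast (e0 h) (e1 h)) := h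
  have H2 : Path.Homotopic (toPath f).symm ((toPath g).cast (e0 h) (e1 h)).symm :=
    Nonempty.map Path.Homotopy.symm₂ H
  exact H2

lemma memI {t a b : I} : (1 - (t:ℝ)) * (a:ℝ) + (t:ℝ) * (b:ℝ) ∈ I := by
  constructor
  · nlinarith [t.2.1, t.2.2, a.2.1, a.2.2, b.2.1, b.2.2]
  · nlinarith [t.2.1, t.2.2, a.2.1, a.2.2, b.2.1, b.2.2]

lemma lin (f : C(I,X)) (φ ψ : C(I,I)) (h0 : φ 0 = ψ 0) (h1 : φ 1 = ψ 1) :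
    pRel (f.comp φ) (f.comp ψ) := by
  refine ⟨{ toFun := fun p =>
              f ⟨(1 - (p.1:ℝ)) * ((φ p.2 : I) : ℝ) + (p.1:ℝ) * ((ψ p.2 : I) : ℝ), memI⟩,
            continuous_toFun := ?_, map_zero_left := ?_, map_one_left := ?_, prop' := ?_ }⟩
  · apply f.continuous.comp
    apply Continuous.subtype_mk
    fun_prop
  · intro x; simp
  · intro x; simp
  · intro t x hx
    rcases hx with hx | hx
    · subst hx
      show f _ = f (φ 0)
      congr 1
      have hc : ((ψ 0 : I) : ℝ) = ((φ 0 : I) : ℝ) := by rw [h0]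
      ext
      show (1 - (t:ℝ)) * (φ 0 : ℝ) + (t:ℝ) * (ψ 0 : ℝ) = (φ 0 : ℝ)
      rw [hc]; ring
    · simp only [Set.mem_singleton_iff] at hx; subst hx
      show f _ = f (φ 1)
      congr 1
      have hc : ((ψ 1 : I) : ℝ) = ((φ 1 : I) : ℝ) := by rw [h1]
      ext
      show (1 - (t:ℝ)) * (φ 1 : ℝ) + (t:ℝ) * (ψ 1 : ℝ) = (φ 1 : ℝ)
      rw [hc]; ring

def affI (a b : I) : C(I,I) := ⟨fun t => ⟨(1 - (t:ℝ)) * a + (t:ℝ) * b, memI⟩, by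
  apply Continuous.subtype_mk; fun_prop⟩

@[simp] lemma affI_zero (a b : I) : affI a b 0 = a := by ext; simp [affI]
@[simp] lemma affI_one (a b : I) : affI a b 1 = b := by ext; simp [affI]

def res (f : C(I,X)) (a b : I) : C(I,X) := f.comp (affI a b)
@[simp] lemma res_zero (f : C(I,X)) (a b : I) : res f a b 0 = f a := by simp [res]
@[simp] lemma res_one (f : C(I,X)) (a b : I) : res f a b 1 = f b := by simp [res]

lemma range_affI_subset (a b : I) (hab : a ≤ b) : Set.range (affI a b) ⊆ Set.Icc a b := by
  rintro _ ⟨t, rfl⟩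
  have h1 := t.2.1; have h2 := t.2.2
  have hab' : (a:ℝ) ≤ b := hab
  constructor
  · show (a:ℝ) ≤ _; simp only [affI, ContinuousMap.coe_mk]; nlinarith
  · show ((_:I):ℝ) ≤ b; simp only [affI, ContinuousMap.coe_mk]; nlinarith

lemma range_res_subset (f : C(I,X)) (a b : I) (hab : a ≤ b) :
    Set.range (res f a b) ⊆ f '' Set.Icc a b := by
  rintro _ ⟨t, rfl⟩
  exact ⟨affI a b t, range_affI_subset a b hab ⟨t, rfl⟩, rfl⟩

lemma res_zero_one (f : C(I,X)) : res f 0 1 = f := by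
  ext t; simp only [res, ContinuousMap.comp_apply]
  congr 1; ext; simp [affI]

lemma comp_concat (f : C(I,X)) (u v : C(I,I)) (h : v 1 = u 0)
    (h' : (f.comp v) 1 = (f.comp u) 0) :
    concat (f.comp u) (f.comp v) h' = f.comp (concat u v h) := by
  ext t
  show ((toPath (f.comp v)).trans _) t = f (((toPath v).trans _) t)
  rw [Path.trans_apply, Path.trans_apply]
  split_ifs <;> rfl

lemma split (f : C(I,X)) (a b c : I) (h : res f a b 1 = res f b c 0) :
    pRel (res f a c) (concat (res f b c) (res f a b) h) := by
  simp only [res] at h ⊢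
  rw [comp_concat f (affI b c) (affI a b) (by simp)]
  exact lin f (affI a c) (concat (affI b c) (affI a b) (by simp)) (by simp) (by simp)

/-- Two paths with the same endpoints whose ranges lie in a single relatively
inessential set are path-homotopic. -/
lemma srh {W : Set X} (hW : RelInessential X W) {A B : C(I,X)}
    (hA : Set.range A ⊆ W) (hB : Set.range B ⊆ W) (h0 : A 0 = B 0) (h1 : A 1 = B 1) :
    pRel A B := by
  have hrevB1 : rev B 0 = B 1 := rev_zero B
  have eL : A 1 = rev B 0 := by simp [h1]
  set L : C(I,X) := concat (rev B) A eL with hLdef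
  have hLrange : Set.range L ⊆ W := by
    rw [hLdef, range_concat, range_rev]
    exact Set.union_subset hA hB
  have hL0 : L 0 = A 0 := concat_zero _ _ _
  have hL1 : L 1 = B 0 := by rw [hLdef, concat_one, rev_one]
  have hL10 : L 1 = L 0 := by rw [hL1, hL0, h0]
  have hnull : pRel L (ContinuousMap.const I (L 0)) := hW L hLrange hL10
  have hconst : (ContinuousMap.const I (L 0)) = ContinuousMap.const I (B 0) := by
    rw [hL0, h0]
  rw [hconst] at hnull
  have eBL : L 1 = B 0 := hL1
  calc A ≈ₚ (concat (ContinuousMap.const I (B 1)) A (by simp [h1])) :=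
        pRel_symm (concat_const_left A (B 1) (by simp [h1]))
    _ ≈ₚ (concat (concat B (rev B) (by simp)) A (by simp [h1])) :=
        concat_congr (pRel_symm (concat_rev_right B (by simp))) (pRel_refl A) _ _
    _ ≈ₚ (concat B L eBL) :=
        pRel_symm (concat_assoc B (rev B) A eL (by simp) eBL (by simp [h1]))
    _ ≈ₚ (concat B (ContinuousMap.const I (B 0)) rfl) :=
        concat_congr (pRel_refl B) hnull _ _
    _ ≈ₚ B := concat_const_right B (B 0) rfl


/-- Stripping the auxiliary paths: if `A ~ δ ⧠ (γ ⧠ θ)` then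
`rev δ ⧠ (A ⧠ rev θ) ~ γ`. -/
lemma strip {γ δ θ A : C(I,X)} (hθ : θ 1 = γ 0) (hδ : (concat γ θ hθ) 1 = δ 0)
    (hA : pRel A (concat δ (concat γ θ hθ) hδ))
    (h₁ : rev θ 1 = A 0) (h₂ : (concat A (rev θ) h₁) 1 = rev δ 0) :
    pRel (concat (rev δ) (concat A (rev θ) h₁) h₂) γ := by
  have hγδ : γ 1 = δ 0 := by rw [← hδ, concat_one]
  have hA0 : A 0 = θ 0 := by rw [e0 hA, concat_zero, concat_zero]
  have hA1 : A 1 = δ 1 := by rw [e1 hA, concat_one]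
  have inner2 : pRel (concat (concat γ θ hθ) (rev θ) (by simp [hA0, ← h₁])) γ := by
    calc (concat (concat γ θ hθ) (rev θ) (by simp [hA0, ← h₁]))
        ≈ₚ concat γ (concat θ (rev θ) (by simp)) (by simp [hθ]) :=
          pRel_symm (concat_assoc γ θ (rev θ) (by simp) hθ (by simp [hθ]) (by simp [hA0, ← h₁]))
      _ ≈ₚ concat γ (ContinuousMap.const I (θ 1)) (by simp [hθ]) :=
          concat_congr (pRel_refl γ) (concat_rev_right θ (by simp)) _ _
      _ ≈ₚ γ := concat_const_right γ (θ 1) hθ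
  calc (concat (rev δ) (concat A (rev θ) h₁) h₂)
      ≈ₚ concat (rev δ) (concat (concat δ (concat γ θ hθ) hδ) (rev θ) (by simp [hA0, ← h₁]))
          (by simp [hA1]) :=
        concat_congr (pRel_refl _) (concat_congr hA (pRel_refl _) _ _) _ _
    _ ≈ₚ concat (rev δ) (concat δ (concat (concat γ θ hθ) (rev θ) (by simp [hA0, ← h₁])) (by simp [hδ]))
          (by simp [hA1]) :=
        concat_congr (pRel_refl _)
          (pRel_symm (concat_assoc δ (concat γ θ hθ) (rev θ) (by simp [hA0, ← h₁]) hδ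
            (by simp [hδ]) (by simp [hA0, ← h₁]))) _ _
    _ ≈ₚ concat (rev δ) (concat δ γ hγδ) (by simp [hA1]) :=
        concat_congr (pRel_refl _) (concat_congr (pRel_refl δ) inner2 _ _) _ _
    _ ≈ₚ concat (concat (rev δ) δ (by simp)) γ (by simp [hγδ]) :=
        concat_assoc (rev δ) δ γ hγδ (by simp) (by simp [hA1]) (by simp [hγδ])
    _ ≈ₚ concat (ContinuousMap.const I (δ 0)) γ (by simp [hγδ]) :=
        concat_congr (concat_rev_left δ (by simp)) (pRel_refl γ) _ _
    _ ≈ₚ γ := concat_const_left γ (δ 0) (by simp [hγδ])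

end PAlg

namespace PTop
open PAlg

lemma pq_eq_iff {X : Type*} [TopologicalSpace X] {f g : C(I,X)} : pq f = pq g ↔ pRel f g :=
  ⟨Quotient.exact, fun h => Quot.sound h⟩

lemma continuous_pq {X : Type*} [TopologicalSpace X] : Continuous (pq : C(I,X) → Pi1 X) :=
  continuous_coinduced_rng

lemma isOpen_pi1_iff {X : Type*} [TopologicalSpace X] (S : Set (Pi1 X)) :
    IsOpen S ↔ IsOpen (pq ⁻¹' S) :=
  isOpen_coinduced

lemma continuous_srcMap {X : Type*} [TopologicalSpace X] : Continuous (srcMap : Pi1 X → X) :=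
  Continuous.quotient_lift (continuous_eval_const (0 : I)) _

lemma continuous_rngMap {X : Type*} [TopologicalSpace X] : Continuous (rngMap : Pi1 X → X) :=
  Continuous.quotient_lift (continuous_eval_const (1 : I)) _

end PTop

namespace PTop
open PAlg

lemma mem_nhd {X : Type*} [TopologicalSpace X] (f : C(I,X)) (U V : Set X)
    (h1 : f 1 ∈ U) (h0 : f 0 ∈ V) : pq f ∈ Nhd (pq f) U V := by
  refine ⟨f, ContinuousMap.const I (f 1), ContinuousMap.const I (f 0), rfl, rfl, rfl,
    by rintro _ ⟨t, rfl⟩; exact h1, by rintro _ ⟨t, rfl⟩; exact h0, ?_⟩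
  refine (pq_eq_iff.mpr (pRel_symm ?_))
  calc (concat (ContinuousMap.const I (f 1)) (concat f (ContinuousMap.const I (f 0)) rfl)
          ((concat_one f (ContinuousMap.const I (f 0)) rfl).trans rfl))
      ≈ₚ concat f (ContinuousMap.const I (f 0)) rfl :=
        concat_const_left _ (f 1) (by exact concat_one _ _ _)
    _ ≈ₚ f := concat_const_right f (f 0) rfl

lemma nhd_disjoint {X : Type*} [TopologicalSpace X] {f g : C(I,X)} {U V : Set X}
    (hU : RelInessential X U) (hV : RelInessential X V)
    (h0 : f 0 = g 0) (h1 : f 1 = g 1) (hfg : ¬ pRel f g) :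
    Disjoint (Nhd (pq f) U V) (Nhd (pq g) U V) := by
  rw [Set.disjoint_left]
  rintro b ⟨γ, δ, θ, hθ, hδ, hγf, hδU, hθV, rfl⟩ ⟨γ', δ', θ', hθ', hδ', hγg, hδ'U, hθ'V, hb⟩
  apply hfg
  set A := concat δ (concat γ θ hθ) ((concat_one γ θ hθ).trans hδ) with hAdef
  set A' := concat δ' (concat γ' θ' hθ') ((concat_one γ' θ' hθ').trans hδ') with hA'def
  have hγf' : pRel γ f := pq_eq_iff.mp hγf
  have hγg' : pRel γ' g := pq_eq_iff.mp hγg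
  have hAA' : pRel A A' := pq_eq_iff.mp hb
  have hA1 : A 1 = δ 1 := concat_one _ _ _
  have hA'1 : A' 1 = δ' 1 := concat_one _ _ _
  have hA0 : A 0 = θ 0 := by rw [hAdef, concat_zero, concat_zero]
  have hA'0 : A' 0 = θ' 0 := by rw [hA'def, concat_zero, concat_zero]
  -- the two connecting paths are themselves homotopic, being small paths with equal endpoints
  have hδδ' : pRel δ δ' := by
    apply srh hU hδU hδ'U
    · rw [← hδ, ← hδ', e1 hγf', e1 hγg', h1]
    · rw [← hA1, ← hA'1, e1 hAA']
  have hθθ' : pRel θ θ' := by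
    apply srh hV hθV hθ'V
    · rw [← hA0, ← hA'0, e0 hAA']
    · rw [hθ, hθ', e0 hγf', e0 hγg', h0]
  have S1 : pRel (concat (rev δ) (concat A (rev θ) (by simp [hA0]))
      (by simp [hA1])) γ :=
    strip hθ ((concat_one γ θ hθ).trans hδ) (pRel_refl A) _ _
  have S2 : pRel (concat (rev δ') (concat A (rev θ') (by simp [hA0, e0 hθθ']))
      (by simp [hA1, e1 hδδ'])) γ' :=
    strip hθ' ((concat_one γ' θ' hθ').trans hδ') hAA' _ _
  calc f ≈ₚ γ := pRel_symm hγf'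
    _ ≈ₚ concat (rev δ) (concat A (rev θ) (by simp [hA0])) (by simp [hA1]) := pRel_symm S1
    _ ≈ₚ concat (rev δ') (concat A (rev θ') (by simp [hA0, e0 hθθ'])) (by simp [hA1, e1 hδδ']) :=
        concat_congr (rev_congr hδδ') (concat_congr (pRel_refl A) (rev_congr hθθ') _ _) _ _
    _ ≈ₚ γ' := S2
    _ ≈ₚ g := hγg'

end PTop


namespace PTop
open PAlg

/-- The core neighbourhood lemma: every open `U ∋ h 1`, `V ∋ h 0` give an open
neighbourhood `N` of `h` in `C(I,X)` such that every `h' ∈ N` is path-homotopic to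
`δ ⧠ h ⧠ θ` with `δ` a path in `U` and `θ` a path in `V`. -/
lemma core {X : Type*} [TopologicalSpace X] [LocallyPathConnectedSpace X]
    (hX : SemilocSimplyConnected X) (h : C(I,X)) (U V : Set X)
    (hUo : IsOpen U) (hVo : IsOpen V) (h1U : h 1 ∈ U) (h0V : h 0 ∈ V) :
    ∃ N : Set C(I,X), IsOpen N ∧ h ∈ N ∧ ∀ h' ∈ N,
      ∃ (δ θ : C(I,X)) (hθ : θ 1 = h 0) (hδ : h 1 = δ 0),
        Set.range δ ⊆ U ∧ Set.range θ ⊆ V ∧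
        pRel h' (concat δ (concat h θ hθ) ((concat_one h θ hθ).trans hδ)) := by
  classical
  choose W hWo hWm hWr using fun x : X => hX x
  obtain ⟨ε, hε, hleb⟩ := lebesgue_number_lemma_of_metric (isCompact_univ)
    (c := fun x : X => h ⁻¹' W x) (fun x => (hWo x).preimage h.continuous)
    (by intro u _; exact Set.mem_iUnion.mpr ⟨h u, hWm (h u)⟩)
  choose ι hι using fun u : I => hleb u trivial
  obtain ⟨n₀, hn₀⟩ := exists_nat_one_div_lt hε
  set m : ℕ := n₀ + 1 with hmdef
  have hm1 : 1 ≤ m := Nat.le_add_left 1 n₀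
  have hmR : (0:ℝ) < (m:ℝ) := by positivity
  have hmε : 1 / (m:ℝ) < ε := by exact_mod_cast hn₀
  set t : ℕ → I := fun i =>
    ⟨min ((i:ℝ)/(m:ℝ)) 1, le_min (by positivity) zero_le_one, min_le_right _ _⟩ with htdef
  have htcoe : ∀ i, i ≤ m → ((t i : I) : ℝ) = (i:ℝ)/(m:ℝ) := by
    intro i hi
    apply min_eq_left
    rw [div_le_one hmR]
    exact_mod_cast hi
  have ht0 : t 0 = 0 := Subtype.ext (by simp [htdef])
  have htm : t m = 1 := Subtype.ext (by
    simp only [htdef]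
    rw [div_self (ne_of_gt hmR)]
    simp)
  have htmono : ∀ i j, i ≤ j → t i ≤ t j := by
    intro i j hij
    apply Subtype.coe_le_coe.mp
    simp only [htdef]
    apply min_le_min _ le_rfl
    have hij' : (i:ℝ) ≤ (j:ℝ) := by exact_mod_cast hij
    gcongr
  have ht0le : ∀ k, (0:I) ≤ t k := fun k => ht0 ▸ htmono 0 k (Nat.zero_le k)
  set W' : ℕ → Set X := fun i => W (ι (t i)) with hW'def
  have hW'o : ∀ i, IsOpen (W' i) := fun i => hWo _
  have hW'r : ∀ i, RelInessential X (W' i) := fun i => hWr _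
  have hIcc : ∀ i, i + 1 ≤ m → ∀ x ∈ Set.Icc (t i) (t (i+1)), h x ∈ W' i := by
    intro i hi x hx
    apply hι (t i)
    rw [Metric.mem_ball, Subtype.dist_eq, Real.dist_eq, abs_sub_lt_iff]
    have hxl : ((t i : I) : ℝ) ≤ (x:I) := hx.1
    have hxr : ((x:I) : ℝ) ≤ ((t (i+1) : I) : ℝ) := hx.2
    have hti : ((t i : I) : ℝ) = (i:ℝ)/(m:ℝ) := htcoe i (le_trans (Nat.le_succ i) hi)
    have hti1 : ((t (i+1) : I) : ℝ) = ((i+1:ℕ):ℝ)/(m:ℝ) := htcoe (i+1) hi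
    constructor
    · have : ((x:I):ℝ) - t i ≤ 1/(m:ℝ) := by
        rw [hti]
        have : ((i+1:ℕ):ℝ)/(m:ℝ) - (i:ℝ)/(m:ℝ) = 1/(m:ℝ) := by
          push_cast; ring
        calc ((x:I):ℝ) - (i:ℝ)/(m:ℝ) ≤ ((i+1:ℕ):ℝ)/(m:ℝ) - (i:ℝ)/(m:ℝ) := by
              rw [← hti1]; linarith
          _ = 1/(m:ℝ) := this
      linarith
    · have : (0:ℝ) ≤ ((x:I):ℝ) - t i := by linarith
      linarith
  set D : ℕ → Set X := fun i =>
    (if i = 0 then V else W' (i-1)) ∩ (if i = m then U else W' i) with hDdef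
  have hDo : ∀ i, IsOpen (D i) := by
    intro i
    apply IsOpen.inter
    · split_ifs; exacts [hVo, hW'o _]
    · split_ifs; exacts [hUo, hW'o _]
  have hD0V : D 0 ⊆ V := by
    intro x hx
    have := hx.1
    simpa using this
  have hDmU : D m ⊆ U := by
    intro x hx
    have := hx.2
    simpa using this
  have hD1 : ∀ i, 1 ≤ i → D i ⊆ W' (i-1) := by
    intro i hi x hx
    have := hx.1
    rw [if_neg (by omega)] at this
    exact this
  have hD2 : ∀ i, i < m → D i ⊆ W' i := by
    intro i hi x hx
    have := hx.2
    rw [if_neg (by omega)] at this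
    exact this
  have hDmem : ∀ i, i ≤ m → h (t i) ∈ D i := by
    intro i hi
    constructor
    · split_ifs with he
      · subst he; rw [ht0]; exact h0V
      · apply hIcc (i-1) (by omega)
        have hii : i - 1 + 1 = i := by omega
        rw [hii]
        exact ⟨htmono _ _ (by omega), le_rfl⟩
    · split_ifs with he
      · subst he; rw [htm]; exact h1U
      · apply hIcc i (by omega)
        exact ⟨le_rfl, htmono _ _ (by omega)⟩
  set C : ℕ → Set X := fun i => pathComponentIn (D i) (h (t i)) with hCdef
  have hCo : ∀ i, IsOpen (C i) := fun i => (hDo i).pathComponentIn _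
  set N : Set C(I,X) :=
    {h' | (∀ i, i < m → Set.MapsTo h' (Set.Icc (t i) (t (i+1))) (W' i)) ∧
      ∀ i, i ≤ m → h' (t i) ∈ C i} with hNdef
  have hNopen : IsOpen N := by
    have : N = (⋂ i ∈ Finset.range m,
          {h' : C(I,X) | Set.MapsTo h' (Set.Icc (t i) (t (i+1))) (W' i)}) ∩
        (⋂ i ∈ Finset.range (m+1), {h' : C(I,X) | h' (t i) ∈ C i}) := by
      ext h'
      simp only [hNdef, Set.mem_setOf_eq, Set.mem_inter_iff, Set.mem_iInter,
        Finset.mem_range, Nat.lt_succ_iff]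
    rw [this]
    apply IsOpen.inter
    · apply isOpen_biInter_finset
      intro i _
      exact ContinuousMap.isOpen_setOf_mapsTo (IsClosed.isCompact isClosed_Icc) (hW'o i)
    · apply isOpen_biInter_finset
      intro i _
      exact (hCo i).preimage (continuous_eval_const (t i))
  have hhN : h ∈ N := by
    constructor
    · intro i hi x hx
      exact hIcc i (by omega) x hx
    · intro i hi
      exact mem_pathComponentIn_self (hDmem i hi)
  refine ⟨N, hNopen, hhN, ?_⟩
  intro h' hN'
  obtain ⟨hN1, hN2⟩ := hN'
  have hJ : ∀ i, i ≤ m → JoinedIn (D i) (h (t i)) (h' (t i)) := fun i hi => hN2 i hi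
  choose p hp using hJ
  set P : ℕ → C(I,X) := fun i =>
    if hi : i ≤ m then (p i hi).toContinuousMap else ContinuousMap.const I (h 0) with hPdef
  have hP0 : ∀ i, i ≤ m → P i 0 = h (t i) := by
    intro i hi; simp only [hPdef, dif_pos hi]; exact (p i hi).source
  have hP1 : ∀ i, i ≤ m → P i 1 = h' (t i) := by
    intro i hi; simp only [hPdef, dif_pos hi]; exact (p i hi).target
  have hPr : ∀ i, (hi : i ≤ m) → Set.range (P i) ⊆ D i := by
    intro i hi x hx
    simp only [hPdef, dif_pos hi] at hx
    obtain ⟨u, rfl⟩ := hx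
    exact hp i hi u
  -- ranges of restricted paths
  have hresh' : ∀ i, i < m → Set.range (res h' (t i) (t (i+1))) ⊆ W' i := by
    intro i hi
    refine subset_trans (range_res_subset h' _ _ (htmono _ _ (Nat.le_succ i))) ?_
    exact Set.MapsTo.image_subset (hN1 i hi)
  have hresh : ∀ i, i < m → Set.range (res h (t i) (t (i+1))) ⊆ W' i := by
    intro i hi
    refine subset_trans (range_res_subset h _ _ (htmono _ _ (Nat.le_succ i))) ?_
    intro x hx
    obtain ⟨u, hu, rfl⟩ := hx
    exact hIcc i (by omega) u hu
  have key : ∀ k, 1 ≤ k → k ≤ m →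
      ∃ (e₁ : rev (P 0) 1 = res h 0 (t k) 0)
        (e₂ : (concat (res h 0 (t k)) (rev (P 0)) e₁) 1 = P k 0),
        pRel (res h' 0 (t k)) (concat (P k) (concat (res h 0 (t k)) (rev (P 0)) e₁) e₂) := by
    intro k hk
    induction k, hk using Nat.le_induction with
    | base =>
      intro h1m
      have e₁ : rev (P 0) 1 = res h 0 (t 1) 0 := by
        rw [rev_one, hP0 0 (by omega), res_zero, ht0]
      have e₂ : (concat (res h 0 (t 1)) (rev (P 0)) e₁) 1 = P 1 0 := by
        rw [concat_one, res_one, hP0 1 (by omega)]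
      refine ⟨e₁, e₂, ?_⟩
      apply srh (hW'r 0)
      · have hre : res h' 0 (t 1) = res h' (t 0) (t 1) := by rw [ht0]
        rw [hre]
        exact hresh' 0 (by omega)
      · rw [range_concat, range_concat, range_rev]
        refine Set.union_subset (Set.union_subset ?_ ?_) ?_
        · exact subset_trans (hPr 0 (by omega)) (hD2 0 (by omega))
        · have hre : res h 0 (t 1) = res h (t 0) (t 1) := by rw [ht0]
          rw [hre]
          exact hresh 0 (by omega)
        · exact subset_trans (hPr 1 (by omega)) (hD1 1 (by omega))
      · rw [res_zero, concat_zero, concat_zero, rev_zero, hP1 0 (by omega), ht0]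
      · rw [res_one, concat_one, hP1 1 (by omega)]
    | succ k hk ih =>
      intro hk1m
      obtain ⟨e₁, e₂, IH⟩ := ih (by omega)
      have hkm : k < m := by omega
      have hP00 : P 0 0 = h 0 := by rw [hP0 0 (by omega), ht0]
      have hP01 : P 0 1 = h' 0 := by rw [hP1 0 (by omega), ht0]
      -- the small piece
      have ep₁ : rev (P k) 1 = res h (t k) (t (k+1)) 0 := by
        rw [rev_one, hP0 k (by omega), res_zero]
      have ep₂ : (concat (res h (t k) (t (k+1))) (rev (P k)) ep₁) 1 = P (k+1) 0 := by
        rw [concat_one, res_one, hP0 (k+1) (by omega)]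
      have piece : pRel (res h' (t k) (t (k+1)))
          (concat (P (k+1)) (concat (res h (t k) (t (k+1))) (rev (P k)) ep₁) ep₂) := by
        apply srh (hW'r k)
        · exact hresh' k hkm
        · rw [range_concat, range_concat, range_rev]
          refine Set.union_subset (Set.union_subset ?_ ?_) ?_
          · exact subset_trans (hPr k (by omega)) (hD2 k hkm)
          · exact hresh k hkm
          · exact subset_trans (hPr (k+1) (by omega)) (hD1 (k+1) (by omega))
        · rw [res_zero, concat_zero, concat_zero, rev_zero, hP1 k (by omega)]
        · rw [res_one, concat_one, hP1 (k+1) (by omega)]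
      -- abbreviations
      set a : C(I,X) := res h (t k) (t (k+1)) with hadef
      set b : C(I,X) := res h 0 (t k) with hbdef
      set q : C(I,X) := rev (P k) with hqdef
      set r : C(I,X) := rev (P 0) with hrdef
      have hb1 : b 1 = h (t k) := res_one h 0 (t k)
      have ha0 : a 0 = h (t k) := res_zero h (t k) (t (k+1))
      have ha1 : a 1 = h (t (k+1)) := res_one h (t k) (t (k+1))
      have hq0 : q 0 = h' (t k) := by rw [hqdef, rev_zero, hP1 k (by omega)]
      have hq1 : q 1 = h (t k) := by rw [hqdef, rev_one, hP0 k (by omega)]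
      have hr0 : r 0 = h' 0 := by rw [hrdef, rev_zero, hP01]
      have hr1 : r 1 = h 0 := by rw [hrdef, rev_one, hP00]
      have eZ : r 1 = b 0 := by rw [hr1, hbdef, res_zero]
      set Z : C(I,X) := concat b r eZ with hZdef
      have hZ1 : Z 1 = h (t k) := by rw [hZdef, concat_one, hb1]
      have hZ0 : Z 0 = h' 0 := by rw [hZdef, concat_zero, hr0]
      have eY : Z 1 = P k 0 := by rw [hZ1, hP0 k (by omega)]
      set Y : C(I,X) := concat (P k) Z eY with hYdef
      have hY1 : Y 1 = h' (t k) := by rw [hYdef, concat_one, hP1 k (by omega)]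
      have hY0 : Y 0 = h' 0 := by rw [hYdef, concat_zero, hZ0]
      have e₁' : rev (P 0) 1 = res h 0 (t (k+1)) 0 := by
        rw [rev_one, hP00, res_zero]
      have e₂' : (concat (res h 0 (t (k+1))) (rev (P 0)) e₁') 1 = P (k+1) 0 := by
        rw [concat_one, res_one, hP0 (k+1) (by omega)]
      refine ⟨e₁', e₂', ?_⟩
      -- split h' at t k
      have esplit : res h' 0 (t k) 1 = res h' (t k) (t (k+1)) 0 := by
        rw [res_one, res_zero]
      have hsplit : pRel (res h' 0 (t (k+1)))
          (concat (res h' (t k) (t (k+1))) (res h' 0 (t k)) esplit) :=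
        split h' 0 (t k) (t (k+1)) esplit
      have esplith : res h 0 (t k) 1 = res h (t k) (t (k+1)) 0 := by
        rw [res_one, res_zero]
      have hsplith : pRel (concat a b esplith) (res h 0 (t (k+1))) :=
        pRel_symm (split h 0 (t k) (t (k+1)) esplith)
      -- main calc
      have hYIH : pRel (res h' 0 (t k)) Y := IH
      have hPk0 : P k 0 = h (t k) := hP0 k (by omega)
      have hPk1 : P k 1 = h' (t k) := hP1 k (by omega)
      have hPs0 : P (k+1) 0 = h (t (k+1)) := hP0 (k+1) (by omega)
      have hPs1 : P (k+1) 1 = h' (t (k+1)) := hP1 (k+1) (by omega)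
      calc (res h' 0 (t (k+1)))
          ≈ₚ concat (res h' (t k) (t (k+1))) (res h' 0 (t k)) esplit := hsplit
        _ ≈ₚ concat (concat (P (k+1)) (concat a q ep₁) ep₂) Y
              (by simp only [concat_zero, hY1, hq0]) :=
            concat_congr piece hYIH _ _
        _ ≈ₚ concat (P (k+1)) (concat (concat a q ep₁) Y (by simp only [concat_zero, hY1, hq0]))
              (by simp only [concat_one, ha1, hPs0]) :=
            pRel_symm (concat_assoc (P (k+1)) (concat a q ep₁) Y _ _ _ _)
        _ ≈ₚ concat (P (k+1)) (concat a (concat q Y (by simp only [hY1, hq0]))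
              (by simp only [concat_one, hq1, ha0]))
              (by simp only [concat_one, ha1, hPs0]) :=
            concat_congr (pRel_refl _)
              (pRel_symm (concat_assoc a q Y (by simp only [hY1, hq0]) ep₁ _ _)) _ _
        _ ≈ₚ concat (P (k+1)) (concat a Z (by simp only [hZ1, ha0]))
              (by simp only [concat_one, ha1, hPs0]) := by
            apply concat_congr (pRel_refl _) _ _ _
            apply concat_congr (pRel_refl a) _ _ _
            calc (concat q Y (by simp only [hY1, hq0]))
                ≈ₚ concat (concat q (P k) (by simp only [hPk1, hq0])) Z
                    (by simp only [concat_zero, hZ1, hq1, hPk0]) :=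
                  concat_assoc q (P k) Z eY (by simp only [hPk1, hq0]) _ _
              _ ≈ₚ concat (ContinuousMap.const I (P k 0)) Z
                    (by simp only [hZ1, hPk0, ContinuousMap.const_apply]) := by
                  apply concat_congr _ (pRel_refl Z) _ _
                  exact concat_rev_left (P k) (by simp)
              _ ≈ₚ Z := concat_const_left Z (P k 0)
                  (by simp only [hZ1, hPk0, ContinuousMap.const_apply])
        _ ≈ₚ concat (P (k+1)) (concat (concat a b esplith) r
              (by simp only [concat_zero, hr1, hbdef, res_zero]))
              (by simp only [concat_one, ha1, hPs0]) :=
            concat_congr (pRel_refl _)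
              (concat_assoc a b r eZ esplith _ _) _ _
        _ ≈ₚ concat (P (k+1)) (concat (res h 0 (t (k+1))) (rev (P 0)) e₁') e₂' :=
            concat_congr (pRel_refl _)
              (concat_congr hsplith (pRel_refl r) _ _) _ _
  obtain ⟨e₁, e₂, K⟩ := key m hm1 le_rfl
  have hresm' : res h' 0 (t m) = h' := by rw [htm]; exact res_zero_one h'
  have hresm : res h 0 (t m) = h := by rw [htm]; exact res_zero_one h
  have hP00 : P 0 0 = h 0 := by rw [hP0 0 (by omega), ht0]
  refine ⟨P m, rev (P 0), by rw [rev_one, hP00], by rw [hP0 m le_rfl, htm], ?_, ?_, ?_⟩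
  · exact subset_trans (hPr m le_rfl) hDmU
  · rw [range_rev]
    exact subset_trans (hPr 0 (by omega)) hD0V
  · calc h' ≈ₚ res h' 0 (t m) := pRel_of_eq hresm'.symm
      _ ≈ₚ concat (P m) (concat (res h 0 (t m)) (rev (P 0)) e₁) e₂ := K
      _ ≈ₚ concat (P m) (concat h (rev (P 0)) (by rw [rev_one, hP00]))
            ((concat_one h (rev (P 0)) (by rw [rev_one, hP00])).trans (by rw [hP0 m le_rfl, htm])) :=
          concat_congr (pRel_refl _)
            (concat_congr (pRel_of_eq hresm) (pRel_refl _) _ _) _ _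

end PTop


namespace PTop
open PAlg

lemma nhd_isOpen {X : Type*} [TopologicalSpace X] [LocallyPathConnectedSpace X]
    (hX : SemilocSimplyConnected X) (a : Pi1 X) {U V : Set X}
    (hUo : IsOpen U) (hVo : IsOpen V) : IsOpen (Nhd a U V) := by
  rw [isOpen_pi1_iff, isOpen_iff_forall_mem_open]
  intro h hh
  obtain ⟨γ, δ, θ, hθ, hδ, hγ, hδU, hθV, hbq⟩ := hh
  have hA : pRel h (concat δ (concat γ θ hθ) ((concat_one γ θ hθ).trans hδ)) :=
    pq_eq_iff.mp hbq
  have h1δ : h 1 = δ 1 := by rw [e1 hA, concat_one]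
  have h0θ : h 0 = θ 0 := by rw [e0 hA, concat_zero, concat_zero]
  have hh1 : h 1 ∈ U := by rw [h1δ]; exact hδU ⟨1, rfl⟩
  have hh0 : h 0 ∈ V := by rw [h0θ]; exact hθV ⟨0, rfl⟩
  obtain ⟨N, hNo, hNh, hNP⟩ := core hX h U V hUo hVo hh1 hh0
  refine ⟨N, ?_, hNo, hNh⟩
  intro h' hN'
  obtain ⟨δ'', θ'', hθ'', hδ'', hδ''U, hθ''V, hrel⟩ := hNP h' hN'
  have eδ : δ 1 = δ'' 0 := h1δ.symm.trans hδ''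
  have eθ : θ'' 1 = θ 0 := hθ''.trans h0θ
  refine ⟨γ, concat δ'' δ eδ, concat θ θ'' eθ,
    by simp only [concat_one, hθ], by simp only [concat_zero]; exact hδ,
    hγ, ?_, ?_, ?_⟩
  · rw [range_concat]; exact Set.union_subset hδU hδ''U
  · rw [range_concat]; exact Set.union_subset hθ''V hθV
  · apply pq_eq_iff.mpr
    have e₃ : θ'' 1 = (concat γ θ hθ) 0 := by simp only [concat_zero]; exact hθ''.trans h0θ
    calc h' ≈ₚ concat δ'' (concat h θ'' hθ'') ((concat_one h θ'' hθ'').trans hδ'') := hrel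
      _ ≈ₚ concat δ'' (concat (concat δ (concat γ θ hθ) ((concat_one γ θ hθ).trans hδ)) θ''
            (by simp only [concat_zero]; exact hθ''.trans h0θ))
            (by simp only [concat_one]; exact h1δ.symm.trans hδ'') :=
          concat_congr (pRel_refl _) (concat_congr hA (pRel_refl _) _ _) _ _
      _ ≈ₚ concat δ'' (concat δ (concat (concat γ θ hθ) θ'' e₃)
            (by simp only [concat_one]; exact hδ))
            (by simp only [concat_one]; exact h1δ.symm.trans hδ'') :=
          concat_congr (pRel_refl _)
            (pRel_symm (concat_assoc δ (concat γ θ hθ) θ'' e₃ ((concat_one γ θ hθ).trans hδ) _ _))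
            _ _
      _ ≈ₚ concat δ'' (concat δ (concat γ (concat θ θ'' eθ) (by simp only [concat_one]; exact hθ))
            (by simp only [concat_one]; exact hδ))
            (by simp only [concat_one]; exact h1δ.symm.trans hδ'') :=
          concat_congr (pRel_refl _)
            (concat_congr (pRel_refl δ)
              (pRel_symm (concat_assoc γ θ θ'' eθ hθ _ _)) _ _) _ _
      _ ≈ₚ concat (concat δ'' δ eδ)
            (concat γ (concat θ θ'' eθ) (by simp only [concat_one]; exact hθ))
            ((concat_one γ (concat θ θ'' eθ) (by simp only [concat_one]; exact hθ)).trans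
              (by simp only [concat_zero]; exact hδ)) :=
          concat_assoc δ'' δ _ _ eδ _ _

lemma t2_pi1 {X : Type*} [TopologicalSpace X] [LocallyPathConnectedSpace X]
    (hX : SemilocSimplyConnected X) [T2Space X] : T2Space (Pi1 X) := by
  constructor
  intro a b hab
  obtain ⟨f, rfl⟩ := Quotient.exists_rep a
  obtain ⟨g, rfl⟩ := Quotient.exists_rep b
  have hab' : pq f ≠ pq g := hab
  by_cases hc0 : f 0 = g 0
  · by_cases hc1 : f 1 = g 1
    · -- same endpoints, not homotopic
      have hfg : ¬ pRel f g := fun hp => hab' (pq_eq_iff.mpr hp)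
      obtain ⟨U, hUo, hU1, hUr⟩ := hX (f 1)
      obtain ⟨V, hVo, hV0, hVr⟩ := hX (f 0)
      refine ⟨Nhd (pq f) U V, Nhd (pq g) U V,
        nhd_isOpen hX _ hUo hVo, nhd_isOpen hX _ hUo hVo,
        mem_nhd f U V hU1 hV0, mem_nhd g U V (hc1 ▸ hU1) (hc0 ▸ hV0),
        nhd_disjoint hUr hVr hc0 hc1 hfg⟩
    · obtain ⟨u, v, huo, hvo, hu, hv, huv⟩ := t2_separation hc1
      exact ⟨rngMap ⁻¹' u, rngMap ⁻¹' v, huo.preimage continuous_rngMap,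
        hvo.preimage continuous_rngMap, hu, hv, huv.preimage rngMap⟩
  · obtain ⟨u, v, huo, hvo, hu, hv, huv⟩ := t2_separation hc0
    exact ⟨srcMap ⁻¹' u, srcMap ⁻¹' v, huo.preimage continuous_srcMap,
      hvo.preimage continuous_srcMap, hu, hv, huv.preimage srcMap⟩

end PTop

end Aux

/-- For a locally path connected, semilocally simply connected `X`, the
following are equivalent: `X` is Hausdorff; `Π₁(X)` with the CO' topology is Hausdorff;
the path-homotopy relation is a closed subset of `P(X) × P(X)`. -/
theorem stmt15 {X : Type*} [TopologicalSpace X] [LocallyPathConnectedSpace X]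
    (hX : SemilocSimplyConnected X) :
    (T2Space X ↔ T2Space (Pi1 X)) ∧
      (T2Space X ↔ IsClosed { p : C(I, X) × C(I, X) | pRel p.1 p.2 }) := by
  have h12 : T2Space X → T2Space (Pi1 X) := fun _ => PTop.t2_pi1 hX
  have h21 : T2Space (Pi1 X) → T2Space X := by
    intro _
    apply T2Space.of_injective_continuous (f := fun x : X => pq (ContinuousMap.const I x))
    · intro x y hxy
      have : pRel (ContinuousMap.const I x) (ContinuousMap.const I y) := PTop.pq_eq_iff.mp hxy
      exact PAlg.e0 this
    · exact PTop.continuous_pq.comp ContinuousMap.continuous_const'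
  have h23 : T2Space (Pi1 X) → IsClosed { p : C(I, X) × C(I, X) | pRel p.1 p.2 } := by
    intro _
    have heq : { p : C(I, X) × C(I, X) | pRel p.1 p.2 } =
        (fun p : C(I, X) × C(I, X) => (pq p.1, pq p.2)) ⁻¹' Set.diagonal (Pi1 X) := by
      ext p
      simp only [Set.mem_setOf_eq, Set.mem_preimage, Set.mem_diagonal_iff]
      exact ⟨fun hp => PTop.pq_eq_iff.mpr hp, fun hp => PTop.pq_eq_iff.mp hp⟩
    rw [heq]
    exact isClosed_diagonal.preimage
      ((PTop.continuous_pq.comp continuous_fst).prodMk (PTop.continuous_pq.comp continuous_snd))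
  have h31 : IsClosed { p : C(I, X) × C(I, X) | pRel p.1 p.2 } → T2Space X := by
    intro hcl
    rw [t2_iff_isClosed_diagonal]
    have heq : Set.diagonal X = (fun q : X × X =>
        ((ContinuousMap.const I q.1 : C(I,X)), (ContinuousMap.const I q.2 : C(I,X)))) ⁻¹'
        { p : C(I, X) × C(I, X) | pRel p.1 p.2 } := by
      ext ⟨x, y⟩
      simp only [Set.mem_diagonal_iff, Set.mem_preimage, Set.mem_setOf_eq]
      constructor
      · rintro rfl; exact PAlg.pRel_refl _
      · intro hp; exact PAlg.e0 hp
    rw [heq]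
    exact hcl.preimage
      ((ContinuousMap.continuous_const'.comp continuous_fst).prodMk
        (ContinuousMap.continuous_const'.comp continuous_snd))
  exact ⟨⟨h12, h21⟩, ⟨fun h => h23 (h12 h), h31⟩⟩

end
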